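/- Let f = αx² + βxy + γy² be an integral binary quadratic form with Δ(f) ≠ 0 and α ≠ 0, and let F be an integral binary quartic form with F_{M_f} = F and Δ(F) ≠ 0. Suppose F is reducible of type 1, i.e., F = m·p·p_{M_f} for some nonzero rational number m and some integral binary quadratic form p, where p_{M_f}(x,y) = (−Δ(f))^{−1}·p(βx+2γy, −2αx−βy). Then L_f(F)² + 4K_f(F) is the square of an integer. -/
import Mathlib


open Polynomial

/-- Value of the binary quartic form `a4 x⁴ + a3 x³y + a2 x²y² + a1 xy³ + a0 y⁴`. -/
def qval {R : Type*} [CommRing R] (a4 a3 a2 a1 a0 x y : R) : R :=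
  a4*x^4 + a3*x^3*y + a2*x^2*y^2 + a1*x*y^3 + a0*y^4

/-- Value of the binary quadratic form `a x² + b xy + c y²`. -/
def qdval {R : Type*} [CommRing R] (a b c x y : R) : R :=
  a*x^2 + b*x*y + c*y^2

/-- The invariant `I(F)`. -/
def Iinv {R : Type*} [CommRing R] (a4 a3 a2 a1 a0 : R) : R :=
  12*a4*a0 - 3*a3*a1 + a2^2

/-- The invariant `J(F)`. -/
def Jinv {R : Type*} [CommRing R] (a4 a3 a2 a1 a0 : R) : R :=
  72*a4*a2*a0 + 9*a3*a2*a1 - 27*a4*a1^2 - 27*a3^2*a0 - 2*a2^3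

/-- `F_{M_f} = F` where `f = a x² + b xy + c y²`, `M_f = [[b, 2c], [-2a, -b]]`,
and the action is the twisted action `F_T = det(T)⁻² F ∘ T`
(note `det M_f = -(b²-4ac)`, so the condition is division-free). -/
def fixedMf {R : Type*} [CommRing R] (a b c a4 a3 a2 a1 a0 : R) : Prop :=
  ∀ x y : R, qval a4 a3 a2 a1 a0 (b*x + 2*c*y) (-(2*a*x) - b*y)
    = (b^2 - 4*a*c)^2 * qval a4 a3 a2 a1 a0 x y

lemma exists_int_of_monic_root (q : ℚ) (p : ℤ[X]) (hp : p.Monic)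
    (h : Polynomial.aeval q p = 0) : ∃ z : ℤ, (z:ℚ) = q :=
  IsIntegrallyClosed.isIntegral_iff.mp ⟨p, hp, h⟩

lemma rat_int_of_cubic (q : ℚ) (A B : ℤ) (h : q^3 - (A:ℚ)*q + (B:ℚ) = 0) :
    ∃ z : ℤ, (z:ℚ) = q := by
  apply exists_int_of_monic_root q (X^3 - C A * X + C B)
  · monicity!
  · simp only [map_add, map_sub, map_mul, map_pow, aeval_X, aeval_C,
      algebraMap_int_eq, eq_intCast, map_intCast]
    linear_combination h

lemma rat_int_of_sq (q : ℚ) (N : ℤ) (h : q^2 = (N:ℚ)) : ∃ z : ℤ, (z:ℚ) = q := by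
  apply exists_int_of_monic_root q (X^2 - C N)
  · monicity!
  · simp only [map_sub, map_pow, aeval_X, aeval_C,
      algebraMap_int_eq, eq_intCast, map_intCast]
    linear_combination h

theorem type1_implies_square (a b c : ℤ) (hdisc : b^2 - 4*a*c ≠ 0) (ha : a ≠ 0)
    (a4 a3 a2 a1 a0 : ℤ) (hfix : fixedMf a b c a4 a3 a2 a1 a0)
    (hΔ : 4 * (Iinv a4 a3 a2 a1 a0)^3 - (Jinv a4 a3 a2 a1 a0)^2 ≠ 0)
    -- `F` is reducible of type 1: `F = m · p · p_{M_f}`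
    (htype1 : ∃ m : ℚ, m ≠ 0 ∧ ∃ p2 p1 p0 : ℤ, ∀ x y : ℚ,
      qval (a4:ℚ) (a3:ℚ) (a2:ℚ) (a1:ℚ) (a0:ℚ) x y
        = m * qdval (p2:ℚ) (p1:ℚ) (p0:ℚ) x y *
          (qdval (p2:ℚ) (p1:ℚ) (p0:ℚ) ((b:ℚ)*x + 2*(c:ℚ)*y) (-(2*(a:ℚ)*x) - (b:ℚ)*y)
            / (-((b:ℚ)^2 - 4*(a:ℚ)*(c:ℚ)))))
    (L K : ℚ)
    (hL : L = -(12*(c:ℚ)*(a4:ℚ) - 3*(b:ℚ)*(a3:ℚ) + 2*(a:ℚ)*(a2:ℚ)) / (2*(a:ℚ)))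
    (hK : K = (72*(b:ℚ)^2*(c:ℚ)*(a4:ℚ)^2 + 9*(a:ℚ)*((b:ℚ)^2 + 4*(a:ℚ)*(c:ℚ))*(a3:ℚ)^2
      + 8*(a:ℚ)^3*(a2:ℚ)^2 - 18*(b:ℚ)*((b:ℚ)^2 + 4*(a:ℚ)*(c:ℚ))*(a4:ℚ)*(a3:ℚ)
      + 12*(a:ℚ)*(3*(b:ℚ)^2 - 4*(a:ℚ)*(c:ℚ))*(a4:ℚ)*(a2:ℚ)
      - 24*(a:ℚ)^2*(b:ℚ)*(a3:ℚ)*(a2:ℚ)) / (4*(a:ℚ)^3)) :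
    ∃ n : ℤ, L^2 + 4*K = (n:ℚ)^2 := by
  obtain ⟨m, hm0, p2, p1, p0, hF⟩ := htype1
  simp only [qval, qdval] at hF
  have hND : (-((b:ℚ)^2 - 4*(a:ℚ)*(c:ℚ))) ≠ 0 := by
    have h0 : ((b^2 - 4*a*c : ℤ):ℚ) ≠ 0 := Int.cast_ne_zero.mpr hdisc
    push_cast at h0
    intro h; apply h0; linarith
  have haq : (a:ℚ) ≠ 0 := Int.cast_ne_zero.mpr ha
  have key : ∀ x y : ℚ,
      ((a4:ℚ)*x^4 + (a3:ℚ)*x^3*y + (a2:ℚ)*x^2*y^2 + (a1:ℚ)*x*y^3 + (a0:ℚ)*y^4)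
        * (-((b:ℚ)^2 - 4*(a:ℚ)*(c:ℚ)))
      = m * ((p2:ℚ)*x^2 + (p1:ℚ)*x*y + (p0:ℚ)*y^2)
          * ((p2:ℚ)*((b:ℚ)*x + 2*(c:ℚ)*y)^2
            + (p1:ℚ)*((b:ℚ)*x + 2*(c:ℚ)*y)*(-(2*(a:ℚ)*x) - (b:ℚ)*y)
            + (p0:ℚ)*(-(2*(a:ℚ)*x) - (b:ℚ)*y)^2) := by
    intro x y
    have h := hF x y
    rw [← mul_div_assoc, eq_div_iff hND] at h
    linear_combination h
  obtain ⟨e, he⟩ : ∃ e : ℚ, e = m / (-((b:ℚ)^2 - 4*(a:ℚ)*(c:ℚ))) := ⟨_, rfl⟩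
  have ha4 : (a4:ℚ) = e * (4*(a:ℚ)^2*(p2:ℚ)*(p0:ℚ) - 2*(a:ℚ)*(b:ℚ)*(p2:ℚ)*(p1:ℚ)
      + (b:ℚ)^2*(p2:ℚ)^2) := by
    rw [he, div_mul_eq_mul_div, eq_div_iff hND]
    linear_combination key 1 0
  have ha0 : (a0:ℚ) = e * ((b:ℚ)^2*(p0:ℚ)^2 - 2*(b:ℚ)*(c:ℚ)*(p1:ℚ)*(p0:ℚ)
      + 4*(c:ℚ)^2*(p2:ℚ)*(p0:ℚ)) := by
    rw [he, div_mul_eq_mul_div, eq_div_iff hND]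
    linear_combination key 0 1
  have ha3 : (a3:ℚ) = e * (4*(a:ℚ)^2*(p1:ℚ)*(p0:ℚ) + 4*(a:ℚ)*(b:ℚ)*(p2:ℚ)*(p0:ℚ)
      - 2*(a:ℚ)*(b:ℚ)*(p1:ℚ)^2 - 4*(a:ℚ)*(c:ℚ)*(p2:ℚ)*(p1:ℚ)
      + 4*(b:ℚ)*(c:ℚ)*(p2:ℚ)^2) := by
    rw [he, div_mul_eq_mul_div, eq_div_iff hND]
    linear_combination (1/12) * key 2 1 - (1/12) * key (-2) 1
      - (1/6) * key 1 1 + (1/6) * key (-1) 1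
  have ha1 : (a1:ℚ) = e * (4*(a:ℚ)*(b:ℚ)*(p0:ℚ)^2 - 4*(a:ℚ)*(c:ℚ)*(p1:ℚ)*(p0:ℚ)
      + 4*(b:ℚ)*(c:ℚ)*(p2:ℚ)*(p0:ℚ) - 2*(b:ℚ)*(c:ℚ)*(p1:ℚ)^2
      + 4*(c:ℚ)^2*(p2:ℚ)*(p1:ℚ)) := by
    rw [he, div_mul_eq_mul_div, eq_div_iff hND]
    linear_combination (2/3) * key 1 1 - (2/3) * key (-1) 1
      - (1/12) * key 2 1 + (1/12) * key (-2) 1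
  have ha2 : (a2:ℚ) = e * (4*(a:ℚ)^2*(p0:ℚ)^2 + 2*(a:ℚ)*(b:ℚ)*(p1:ℚ)*(p0:ℚ)
      - 4*(a:ℚ)*(c:ℚ)*(p1:ℚ)^2 + 2*(b:ℚ)^2*(p2:ℚ)*(p0:ℚ) - (b:ℚ)^2*(p1:ℚ)^2
      + 2*(b:ℚ)*(c:ℚ)*(p2:ℚ)*(p1:ℚ) + 4*(c:ℚ)^2*(p2:ℚ)^2) := by
    rw [he, div_mul_eq_mul_div, eq_div_iff hND]
    linear_combination (1/2) * key 1 1 + (1/2) * key (-1) 1 - key 1 0 - key 0 1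
  have hcubic : L^3 - 3*((Iinv a4 a3 a2 a1 a0 : ℤ):ℚ)*L + ((Jinv a4 a3 a2 a1 a0 : ℤ):ℚ) = 0 := by
    simp only [Iinv, Jinv]
    push_cast
    rw [hL, ha4, ha3, ha2, ha1, ha0]
    field_simp
    ring
  have hid1 : L^2 + 4*K = 12*((Iinv a4 a3 a2 a1 a0 : ℤ):ℚ) - 3*L^2 := by
    simp only [Iinv]
    push_cast
    rw [hL, hK, ha4, ha3, ha2, ha1, ha0]
    field_simp
    ring
  have hn : L^2 + 4*K = (12*e*((a:ℚ)^2*(p0:ℚ)^2 - (a:ℚ)*(b:ℚ)*(p1:ℚ)*(p0:ℚ)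
      - 2*(a:ℚ)*(c:ℚ)*(p2:ℚ)*(p0:ℚ) + (a:ℚ)*(c:ℚ)*(p1:ℚ)^2 + (b:ℚ)^2*(p2:ℚ)*(p0:ℚ)
      - (b:ℚ)*(c:ℚ)*(p2:ℚ)*(p1:ℚ) + (c:ℚ)^2*(p2:ℚ)^2))^2 := by
    rw [hL, hK, ha4, ha3, ha2]
    field_simp
    ring
  obtain ⟨l, hl⟩ := rat_int_of_cubic L (3 * Iinv a4 a3 a2 a1 a0) (Jinv a4 a3 a2 a1 a0)
    (by push_cast; linear_combination hcubic)
  have hNq : L^2 + 4*K = ((12 * Iinv a4 a3 a2 a1 a0 - 3*l^2 : ℤ):ℚ) := by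
    push_cast
    rw [hl]
    linear_combination hid1
  obtain ⟨z, hz⟩ := rat_int_of_sq _ (12 * Iinv a4 a3 a2 a1 a0 - 3*l^2) (hn.symm.trans hNq)
  exact ⟨z, by rw [hn, ← hz]⟩
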